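/- Every subring R of the rational numbers ℚ is solid; that is, the ℤ-linear map from R ⊗_ℤ R to R induced by multiplication is bijective. -/

import Mathlib

open TensorProduct
set_option synthInstance.maxHeartbeats 100000 in
theorem subring_rat_solid (R : Subring ℚ) :
    Function.Bijective (LinearMap.mul' ℤ R) := by
  have key : ∀ a b : R, (a ⊗ₜ[ℤ] b : R ⊗[ℤ] R) = 1 ⊗ₜ (a * b) := by
    intro a b
    set m : ℤ := (a : ℚ).num with hm
    set q : ℤ := ((a : ℚ).den : ℤ) with hq
    have hq0 : (q : ℚ) ≠ 0 := by
      rw [hq]; exact_mod_cast (Nat.cast_ne_zero (R := ℚ)).mpr (a:ℚ).den_nz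
    have hmq : (m : ℚ) = (q : ℚ) * a := by
      rw [hm, hq]; push_cast
      field_simp
      rw [mul_comm, Rat.mul_den_eq_num]
    have hcop : IsCoprime m q := by
      rw [Int.isCoprime_iff_gcd_eq_one]
      rw [hm, hq]; simpa [Int.gcd, Nat.coprime_iff_gcd_eq_one] using (a : ℚ).reduced
    obtain ⟨u, v, huv⟩ := hcop
    have huvQ : (u:ℚ) * m + (v:ℚ) * q = 1 := by exact_mod_cast congrArg (Int.cast : ℤ → ℚ) huv
    have hval : (1 / (q : ℚ)) = (u : ℚ) * (a:ℚ) + v := by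
      rw [div_eq_iff hq0]
      linear_combination (u:ℚ) * hmq - huvQ
    have hmem : (1 / (q : ℚ)) ∈ R := by
      rw [hval]
      exact add_mem (mul_mem (intCast_mem R u) a.2) (intCast_mem R v)
    set e : R := ⟨_, hmem⟩ with he
    have hae : a = m • e := by
      apply Subtype.ext
      show (a : ℚ) = m • (1 / (q:ℚ))
      rw [zsmul_eq_mul, mul_one_div, eq_div_iff hq0]
      linear_combination -hmq
    have hqe : q • e = 1 := by
      apply Subtype.ext
      show q • (1 / (q:ℚ)) = 1
      rw [zsmul_eq_mul, mul_one_div, div_self hq0]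
    calc a ⊗ₜ[ℤ] b = e ⊗ₜ (m • b) := by rw [hae, TensorProduct.smul_tmul]
    _ = e ⊗ₜ (q • (a*b)) := by
        congr 1
        apply Subtype.ext
        show m • (b : ℚ) = q • ((a:ℚ) * b)
        rw [zsmul_eq_mul, zsmul_eq_mul, ← mul_assoc]
        linear_combination (b:ℚ) * hmq
    _ = 1 ⊗ₜ (a*b) := by rw [← TensorProduct.smul_tmul, hqe]
  constructor
  · intro x y h
    have hx : ∀ z : R ⊗[ℤ] R, z = 1 ⊗ₜ (LinearMap.mul' ℤ R z) := by
      intro z; induction z using TensorProduct.induction_on with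
      | zero => rw [map_zero, TensorProduct.tmul_zero]
      | tmul a b => rw [LinearMap.mul'_apply]; exact key a b
      | add x y hx hy => rw [map_add, TensorProduct.tmul_add, ← hx, ← hy]
    rw [hx x, hx y, h]
  · intro r; exact ⟨1 ⊗ₜ r, by rw [LinearMap.mul'_apply, one_mul]⟩
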